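/- There exists an absolute constant C > 0 with the following property. Assume λ ≥ (28σ/√n)(√(ln((n+1)^{d+1})) + 4) and let f̂ be a Lasso estimator over the Heaviside dictionary, i.e. a measurable selection with f̂(ω) a minimizer over h ∈ L1(D) of ‖Y(ω) − h‖² + λ‖h‖_{L1(D)} (assumed to exist for every ω). Then E[ ‖f − f̂‖² + λ‖f̂‖_{L1(D)} ] ≤ C [ inf_{h ∈ L1(D)} ( ‖f − h‖² + λ‖h‖_{L1(D)} ) + λ σ/√n ]. -/

import Mathlib

set_option maxHeartbeats 2000000

open MeasureTheory ProbabilityTheory Real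
open scoped ENNReal NNReal Classical

noncomputable section



def heaviside {d : ℕ} (a : Fin d → ℝ) (b : ℝ) (x : Fin d → ℝ) : ℝ :=
  if 0 < (∑ i, a i * x i) + b then 1 else 0

def memL1D {d : ℕ} (h : (Fin d → ℝ) → ℝ) : Prop :=
  ∃ θ : ((Fin d → ℝ) × ℝ) → ℝ, Summable (fun ab => |θ ab|) ∧
    ∀ x, h x = ∑' ab : (Fin d → ℝ) × ℝ, θ ab * heaviside ab.1 ab.2 x

def l1normD {d : ℕ} (h : (Fin d → ℝ) → ℝ) : ℝ :=
  sInf {s : ℝ | ∃ θ : ((Fin d → ℝ) × ℝ) → ℝ, Summable (fun ab => |θ ab|) ∧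
    (∀ x, h x = ∑' ab : ((Fin d → ℝ) × ℝ), θ ab * heaviside ab.1 ab.2 x) ∧
    s = ∑' ab : ((Fin d → ℝ) × ℝ), |θ ab|}


namespace LassoAux

variable {d : ℕ}

def costSet (h : (Fin d → ℝ) → ℝ) : Set ℝ :=
  {s : ℝ | ∃ θ : ((Fin d → ℝ) × ℝ) → ℝ, Summable (fun ab => |θ ab|) ∧
    (∀ x, h x = ∑' ab : ((Fin d → ℝ) × ℝ), θ ab * heaviside ab.1 ab.2 x) ∧
    s = ∑' ab : ((Fin d → ℝ) × ℝ), |θ ab|}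

lemma l1normD_eq (h : (Fin d → ℝ) → ℝ) : l1normD h = sInf (costSet h) := rfl

lemma costSet_nonneg {h : (Fin d → ℝ) → ℝ} {s : ℝ} (hs : s ∈ costSet h) : 0 ≤ s := by
  obtain ⟨θ, _, _, rfl⟩ := hs
  exact tsum_nonneg fun _ => abs_nonneg _

lemma costSet_nonempty {h : (Fin d → ℝ) → ℝ} (hh : memL1D h) : (costSet h).Nonempty := by
  obtain ⟨θ, hθ, hrep⟩ := hh
  exact ⟨_, θ, hθ, hrep, rfl⟩

lemma l1normD_nonneg {h : (Fin d → ℝ) → ℝ} (hh : memL1D h) : 0 ≤ l1normD h :=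
  le_csInf (costSet_nonempty hh) fun _ hs => costSet_nonneg hs

lemma memL1D_zero : memL1D (fun _ : Fin d → ℝ => (0 : ℝ)) := by
  exact ⟨fun _ => 0, by simpa using summable_zero, fun x => by simp⟩

lemma heaviside_nonneg (a : Fin d → ℝ) (b : ℝ) (x : Fin d → ℝ) : 0 ≤ heaviside a b x := by
  unfold heaviside; split <;> norm_num

lemma heaviside_le_one (a : Fin d → ℝ) (b : ℝ) (x : Fin d → ℝ) : heaviside a b x ≤ 1 := by
  unfold heaviside; split <;> norm_num

lemma abs_heaviside_le (a : Fin d → ℝ) (b : ℝ) (x : Fin d → ℝ) : |heaviside a b x| ≤ 1 := by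
  rw [abs_of_nonneg (heaviside_nonneg a b x)]; exact heaviside_le_one a b x

/-- Dual bound: if all dictionary correlations are bounded by `c`, then the correlation
with `g ∈ L1(D)` is bounded by `c * ‖g‖₁`. -/
lemma dual_bound {n : ℕ} (x : Fin n → Fin d → ℝ) (u : Fin n → ℝ) {c : ℝ}
    (hpat : ∀ (a : Fin d → ℝ) (b : ℝ), |∑ i, u i * heaviside a b (x i)| ≤ c)
    {g : (Fin d → ℝ) → ℝ} (hg : memL1D g) :
    |∑ i, u i * g (x i)| ≤ c * l1normD g := by
  have hc : 0 ≤ c := le_trans (abs_nonneg _) (hpat 0 (-1))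
  have key : ∀ s ∈ costSet g, |∑ i, u i * g (x i)| ≤ c * s := by
    rintro s ⟨θ, hθ, hrep, rfl⟩
    have hsum1 : ∀ i : Fin n,
        Summable (fun ab : (Fin d → ℝ) × ℝ => θ ab * heaviside ab.1 ab.2 (x i)) := by
      intro i
      refine Summable.of_abs ?_
      refine Summable.of_nonneg_of_le (fun ab => abs_nonneg _) (fun ab => ?_) hθ
      rw [abs_mul]
      calc |θ ab| * |heaviside ab.1 ab.2 (x i)| ≤ |θ ab| * 1 :=
            mul_le_mul_of_nonneg_left (abs_heaviside_le _ _ _) (abs_nonneg _)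
        _ = |θ ab| := mul_one _
    set w : ((Fin d → ℝ) × ℝ) → ℝ := fun ab => ∑ i, u i * heaviside ab.1 ab.2 (x i) with hw
    have hT : ∑ i, u i * g (x i) = ∑' ab : (Fin d → ℝ) × ℝ, θ ab * w ab := by
      calc ∑ i, u i * g (x i)
          = ∑ i, ∑' ab : (Fin d → ℝ) × ℝ, u i * (θ ab * heaviside ab.1 ab.2 (x i)) := by
            refine Finset.sum_congr rfl fun i _ => ?_
            rw [hrep (x i), ← tsum_mul_left]
        _ = ∑' ab : (Fin d → ℝ) × ℝ, ∑ i, u i * (θ ab * heaviside ab.1 ab.2 (x i)) :=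
            (Summable.tsum_finsetSum fun i _ => ((hsum1 i).mul_left (u i))).symm
        _ = ∑' ab : (Fin d → ℝ) × ℝ, θ ab * w ab := by
            refine tsum_congr fun ab => ?_
            rw [hw, Finset.mul_sum]
            exact Finset.sum_congr rfl fun i _ => by ring
    have hwle : ∀ ab : (Fin d → ℝ) × ℝ, |w ab| ≤ c := fun ab => hpat ab.1 ab.2
    have habs : ∀ ab : (Fin d → ℝ) × ℝ, |θ ab * w ab| ≤ |θ ab| * c := fun ab => by
      rw [abs_mul]
      exact mul_le_mul_of_nonneg_left (hwle ab) (abs_nonneg _)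
    have hsumW : Summable (fun ab : (Fin d → ℝ) × ℝ => |θ ab * w ab|) :=
      Summable.of_nonneg_of_le (fun _ => abs_nonneg _) habs (hθ.mul_right c)
    rw [hT]
    have hsumW' : Summable (fun ab : (Fin d → ℝ) × ℝ => ‖θ ab * w ab‖) := by
      simpa only [Real.norm_eq_abs] using hsumW
    calc |∑' ab : (Fin d → ℝ) × ℝ, θ ab * w ab|
        = ‖∑' ab : (Fin d → ℝ) × ℝ, θ ab * w ab‖ := (Real.norm_eq_abs _).symm
      _ ≤ ∑' ab : (Fin d → ℝ) × ℝ, ‖θ ab * w ab‖ := norm_tsum_le_tsum_norm hsumW'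
      _ = ∑' ab : (Fin d → ℝ) × ℝ, |θ ab * w ab| := tsum_congr fun ab => Real.norm_eq_abs _
      _ ≤ ∑' ab : (Fin d → ℝ) × ℝ, |θ ab| * c := Summable.tsum_le_tsum habs hsumW (hθ.mul_right c)
      _ = (∑' ab : (Fin d → ℝ) × ℝ, |θ ab|) * c := tsum_mul_right
      _ = c * (∑' ab : (Fin d → ℝ) × ℝ, |θ ab|) := mul_comm _ _
  rcases eq_or_lt_of_le hc with hc0 | hc0
  · obtain ⟨s, hs⟩ := costSet_nonempty hg
    have h1 := key s hs
    rw [← hc0] at h1 ⊢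
    simpa using h1
  · have hdiv : |∑ i, u i * g (x i)| / c ≤ sInf (costSet g) := by
      refine le_csInf (costSet_nonempty hg) fun s hs => ?_
      rw [div_le_iff₀ hc0]
      calc |∑ i, u i * g (x i)| ≤ c * s := key s hs
        _ = s * c := mul_comm _ _
    rw [l1normD_eq]
    calc |∑ i, u i * g (x i)| = (|∑ i, u i * g (x i)| / c) * c := by field_simp
      _ ≤ sInf (costSet g) * c := mul_le_mul_of_nonneg_right hdiv hc
      _ = c * sInf (costSet g) := mul_comm _ _





lemma sum_choose_le (n m : ℕ) (hm : 1 ≤ m) :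
    ∑ k ∈ Finset.Iic m, n.choose k ≤ (n + 1) ^ m := by
  induction m with
  | zero => omega
  | succ m ih =>
    have hins : Finset.Iic (m + 1) = insert (m + 1) (Finset.Iic m) := by
      ext k; simp [Finset.mem_Iic, Finset.mem_insert]; omega
    have hsum : ∑ k ∈ Finset.Iic (m + 1), n.choose k
        = ∑ k ∈ Finset.Iic m, n.choose k + n.choose (m + 1) := by
      rw [hins, Finset.sum_insert (by simp)]
      ring
    rcases Nat.eq_or_lt_of_le hm with h1 | h1
    · have hm0 : m = 0 := by omega
      subst hm0
      rw [hsum]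
      have h0 : Finset.Iic (0:ℕ) = {0} := by ext k; simp
      simp [h0]
      omega
    · have hm' : 1 ≤ m := by omega
      have h2 := ih hm'
      rw [hsum]
      have h3 : n.choose (m + 1) ≤ n ^ (m + 1) := Nat.choose_le_pow n (m + 1)
      have h4 : n ^ (m + 1) ≤ n * (n + 1) ^ m := by
        rw [pow_succ]
        calc n ^ m * n ≤ (n + 1) ^ m * n :=
              Nat.mul_le_mul_right n (Nat.pow_le_pow_left (by omega) m)
          _ = n * (n + 1) ^ m := by ring
      calc ∑ k ∈ Finset.Iic m, n.choose k + n.choose (m + 1)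
          ≤ (n + 1) ^ m + n * (n + 1) ^ m := Nat.add_le_add h2 (h3.trans h4)
        _ = (n + 1) ^ (m + 1) := by ring

variable {d n : ℕ}

/-- The finite set of sign patterns induced by affine halfspaces on the points `x`. -/
def patterns (x : Fin n → Fin d → ℝ) : Finset (Finset (Fin n)) :=
  Finset.univ.powerset.filter
    (fun S => ∃ (a : Fin d → ℝ) (b : ℝ), ∀ i, i ∈ S ↔ 0 < (∑ j, a j * x i j) + b)

lemma mem_patterns_iff {x : Fin n → Fin d → ℝ} {S : Finset (Fin n)} :
    S ∈ patterns x ↔ ∃ (a : Fin d → ℝ) (b : ℝ), ∀ i, i ∈ S ↔ 0 < (∑ j, a j * x i j) + b := by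
  unfold patterns
  rw [Finset.mem_filter]
  simp only [Finset.mem_powerset, Finset.subset_univ, true_and]

lemma filter_mem_patterns (x : Fin n → Fin d → ℝ) (a : Fin d → ℝ) (b : ℝ) :
    (Finset.univ.filter (fun i => 0 < (∑ j, a j * x i j) + b)) ∈ patterns x := by
  rw [mem_patterns_iff]
  exact ⟨a, b, fun i => by simp [Finset.mem_filter]⟩

lemma patterns_nonempty (x : Fin n → Fin d → ℝ) : (patterns x).Nonempty :=
  ⟨_, filter_mem_patterns x 0 (-1)⟩

lemma isLinearMap_fun (a : Fin d → ℝ) : IsLinearMap ℝ (fun y : Fin d → ℝ => ∑ j, a j * y j) := by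
  constructor
  · intro y z
    rw [← Finset.sum_add_distrib]
    exact Finset.sum_congr rfl fun j _ => by simp [Pi.add_apply]; ring
  · intro c y
    rw [Finset.smul_sum]
    exact Finset.sum_congr rfl fun j _ => by simp [Pi.smul_apply, smul_eq_mul]; ring

lemma shattered_card_le (x : Fin n → Fin d → ℝ) {s : Finset (Fin n)}
    (hsh : (patterns x).Shatters s) : s.card ≤ d + 1 := by
  by_contra hcard
  push_neg at hcard
  -- the points indexed by s are affinely dependent
  have hdep : ¬ AffineIndependent ℝ (fun i : {i // i ∈ s} => x i.1) := by
    intro hai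
    have h1 := hai.card_le_finrank_succ
    have h2 : Module.finrank ℝ (vectorSpan ℝ (Set.range fun i : {i // i ∈ s} => x i.1))
        ≤ Module.finrank ℝ (Fin d → ℝ) := Submodule.finrank_le _
    rw [Fintype.card_coe] at h1
    have h3 : Module.finrank ℝ (Fin d → ℝ) = d := by
      simp [Module.finrank_pi]
    omega
  obtain ⟨I, p₀, hp₀pos, hp₀neg⟩ := Convex.radon_partition (𝕜 := ℝ) hdep
  -- the trace of I on s, as a Finset of Fin n
  classical
  set T : Finset (Fin n) := s.filter (fun i => ∃ hi : i ∈ s, (⟨i, hi⟩ : {i // i ∈ s}) ∈ I) with hT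
  obtain ⟨u, huP, hsu⟩ := hsh (show T ⊆ s from Finset.filter_subset _ s)
  obtain ⟨a, b, hu⟩ := mem_patterns_iff.mp huP
  -- the two halfspaces
  have hconvpos : Convex ℝ {y : Fin d → ℝ | 0 < (∑ j, a j * y j) + b} := by
    have := convex_halfSpace_gt (isLinearMap_fun a) (-b)
    convert this using 1
    all_goals ext y; constructor <;> intro hy <;> simp only [Set.mem_setOf_eq] at * <;> linarith
  have hconvneg : Convex ℝ {y : Fin d → ℝ | (∑ j, a j * y j) + b ≤ 0} := by
    have := convex_halfSpace_le (isLinearMap_fun a) (-b)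
    convert this using 1
    all_goals ext y; constructor <;> intro hy <;> simp only [Set.mem_setOf_eq] at * <;> linarith
  -- I maps into the positive halfspace
  have hIpos : (fun i : {i // i ∈ s} => x i.1) '' I ⊆ {y | 0 < (∑ j, a j * y j) + b} := by
    rintro - ⟨i, hiI, rfl⟩
    have hiT : i.1 ∈ T := by
      rw [hT, Finset.mem_filter]
      exact ⟨i.2, i.2, by simpa using hiI⟩
    have hiu : i.1 ∈ u := by
      have : i.1 ∈ s ∩ u := by rw [hsu]; exact hiT
      exact (Finset.mem_inter.mp this).2
    exact (hu i.1).mp hiu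
  have hIneg : (fun i : {i // i ∈ s} => x i.1) '' Iᶜ ⊆ {y | (∑ j, a j * y j) + b ≤ 0} := by
    rintro - ⟨i, hiI, rfl⟩
    have hiu : i.1 ∉ u := by
      intro hiu
      have hiT : i.1 ∈ T := by rw [← hsu]; exact Finset.mem_inter.mpr ⟨i.2, hiu⟩
      rw [hT, Finset.mem_filter] at hiT
      obtain ⟨-, hi, hmem⟩ := hiT
      exact hiI (by simpa using hmem)
    have := (hu i.1).not.mp hiu
    simp only [Set.mem_setOf_eq]
    by_contra hpos
    push_neg at hpos
    exact hiu ((hu i.1).mpr hpos)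
  have h1 : p₀ ∈ {y : Fin d → ℝ | 0 < (∑ j, a j * y j) + b} :=
    convexHull_min hIpos hconvpos hp₀pos
  have h2 : p₀ ∈ {y : Fin d → ℝ | (∑ j, a j * y j) + b ≤ 0} :=
    convexHull_min hIneg hconvneg hp₀neg
  simp only [Set.mem_setOf_eq] at h1 h2
  linarith

lemma patterns_card_le (x : Fin n → Fin d → ℝ) (hd : 1 ≤ d) :
    (patterns x).card ≤ (n + 1) ^ (d + 1) := by
  classical
  have hvc : (patterns x).vcDim ≤ d + 1 := by
    refine Finset.sup_le fun s hs => ?_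
    exact shattered_card_le x (Finset.mem_shatterer.mp hs)
  calc (patterns x).card ≤ (patterns x).shatterer.card := Finset.card_le_card_shatterer _
    _ ≤ ∑ k ∈ Finset.Iic (patterns x).vcDim, (Fintype.card (Fin n)).choose k :=
        Finset.card_shatterer_le_sum_vcDim
    _ ≤ ∑ k ∈ Finset.Iic (d + 1), n.choose k := by
        rw [Fintype.card_fin]
        exact Finset.sum_le_sum_of_subset (Finset.Iic_subset_Iic.mpr hvc)
    _ ≤ (n + 1) ^ (d + 1) := sum_choose_le n (d + 1) (by omega)





lemma gauss_kernel_eq (t x : ℝ) :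
    ((gaussianPDFReal 0 1 x).toNNReal : ℝ≥0) • Real.exp (t * x)
      = ((Real.sqrt (2 * π))⁻¹ * Real.exp (t ^ 2 / 2)) * Real.exp (-(1/2) * (x - t) ^ 2) := by
  rw [NNReal.smul_def, smul_eq_mul, Real.coe_toNNReal _ (gaussianPDFReal_nonneg 0 1 x)]
  have hpdf : gaussianPDFReal 0 1 x = (Real.sqrt (2 * π))⁻¹ * Real.exp (-x ^ 2 / 2) := by
    simp [gaussianPDFReal]
  rw [hpdf, mul_assoc, ← Real.exp_add, mul_assoc, ← Real.exp_add]
  congr 2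
  ring

lemma integral_gauss_shift (t : ℝ) :
    ∫ x : ℝ, Real.exp (-(1/2) * (x - t) ^ 2) = Real.sqrt (2 * π) := by
  have h := integral_sub_right_eq_self (μ := volume) (fun x : ℝ => Real.exp (-(1/2) * x ^ 2)) t
  rw [h, integral_gaussian]
  congr 1
  rw [eq_comm, eq_div_iff (by norm_num : (1:ℝ)/2 ≠ 0)]
  ring

lemma integrable_gauss_shift (t c : ℝ) :
    Integrable (fun x : ℝ => c * Real.exp (-(1/2) * (x - t) ^ 2)) := by
  exact ((integrable_exp_neg_mul_sq (by norm_num : (0:ℝ) < 1/2)).comp_sub_right t).const_mul c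

lemma gaussianReal_std : gaussianReal 0 1
    = volume.withDensity (fun x => ((gaussianPDFReal 0 1 x).toNNReal : ℝ≥0∞)) := by
  rw [gaussianReal_of_var_ne_zero 0 one_ne_zero]
  rfl

lemma integrable_exp_mul_gaussianReal (t : ℝ) :
    Integrable (fun x => Real.exp (t * x)) (gaussianReal 0 1) := by
  rw [gaussianReal_std]
  have hI : Integrable
      (fun x : ℝ => ((gaussianPDFReal 0 1 x).toNNReal : ℝ≥0) • Real.exp (t * x)) volume := by
    refine (integrable_gauss_shift t ((Real.sqrt (2 * π))⁻¹ * Real.exp (t ^ 2 / 2))).congr ?_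
    exact Filter.Eventually.of_forall fun x => (gauss_kernel_eq t x).symm
  exact (integrable_withDensity_iff_integrable_smul (E := ℝ)
    (g := fun x => Real.exp (t * x)) (measurable_gaussianPDFReal 0 1).real_toNNReal).mpr hI

lemma integral_exp_mul_gaussianReal (t : ℝ) :
    ∫ x, Real.exp (t * x) ∂(gaussianReal 0 1) = Real.exp (t ^ 2 / 2) := by
  rw [gaussianReal_std,
    integral_withDensity_eq_integral_smul (measurable_gaussianPDFReal 0 1).real_toNNReal]
  rw [integral_congr_ae (Filter.Eventually.of_forall fun x => gauss_kernel_eq t x)]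
  rw [integral_const_mul, integral_gauss_shift]
  have hs : Real.sqrt (2 * π) ≠ 0 := by positivity
  field_simp

variable {Ω : Type} [MeasurableSpace Ω] {P : Measure Ω}

lemma integrable_exp_mul_X {X : Ω → ℝ} (hX : Measurable X)
    (hmap : P.map X = gaussianReal 0 1) (t : ℝ) :
    Integrable (fun ω => Real.exp (t * X ω)) P := by
  have h := integrable_exp_mul_gaussianReal t
  rw [← hmap] at h
  exact (integrable_map_measure
    (Continuous.aestronglyMeasurable (by continuity)) hX.aemeasurable).mp h

lemma mgf_X {X : Ω → ℝ} (hX : Measurable X)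
    (hmap : P.map X = gaussianReal 0 1) (t : ℝ) :
    mgf X P t = Real.exp (t ^ 2 / 2) := by
  have hsm : AEStronglyMeasurable (fun x => Real.exp (t * x)) (P.map X) :=
    Continuous.aestronglyMeasurable (by continuity)
  have h := integral_map (μ := P) hX.aemeasurable hsm
  rw [hmap, integral_exp_mul_gaussianReal] at h
  exact h.symm

lemma pow_four_le (y : ℝ) : y ^ 4 ≤ 256 * (Real.exp y + Real.exp (-y)) := by
  have key : ∀ z : ℝ, 0 ≤ z → z ^ 4 ≤ 256 * Real.exp z := by
    intro z hz
    have h1 : z / 4 + 1 ≤ Real.exp (z / 4) := Real.add_one_le_exp _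
    have h2 : (z / 4) ^ 4 ≤ (z / 4 + 1) ^ 4 :=
      pow_le_pow_left₀ (by positivity) (by linarith) 4
    have h3 : (z / 4 + 1) ^ 4 ≤ (Real.exp (z / 4)) ^ 4 :=
      pow_le_pow_left₀ (by positivity) h1 4
    have h4 : (Real.exp (z / 4)) ^ 4 = Real.exp z := by
      rw [← Real.exp_nat_mul]
      congr 1
      push_cast
      ring
    nlinarith
  rcases le_total 0 y with hy | hy
  · have := key y hy
    have := Real.exp_pos (-y)
    nlinarith
  · have := key (-y) (by linarith)
    have := Real.exp_pos y
    nlinarith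

lemma exp_half_le : Real.exp (1/2 : ℝ) ≤ 845 / 512 := by
  have h1 : (Real.exp (1/2 : ℝ)) ^ 2 = Real.exp 1 := by
    rw [← Real.exp_nat_mul]
    norm_num
  have h2 : Real.exp 1 < 2.7182818286 := Real.exp_one_lt_d9
  have h3 := Real.exp_pos (1/2 : ℝ)
  nlinarith

lemma integrable_exps [IsProbabilityMeasure P] {X : Ω → ℝ} (hX : Measurable X)
    (hmap : P.map X = gaussianReal 0 1) :
    Integrable (fun ω => 256 * (Real.exp (X ω) + Real.exp (-X ω))) P := by
  have h1 : Integrable (fun ω => Real.exp (X ω)) P := by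
    simpa using integrable_exp_mul_X hX hmap 1
  have h2 : Integrable (fun ω => Real.exp (-X ω)) P := by
    simpa using integrable_exp_mul_X hX hmap (-1)
  exact (h1.add h2).const_mul 256

lemma integrable_pow_four [IsProbabilityMeasure P] {X : Ω → ℝ} (hX : Measurable X)
    (hmap : P.map X = gaussianReal 0 1) :
    Integrable (fun ω => (X ω) ^ 4) P := by
  refine Integrable.mono' (integrable_exps hX hmap) ((hX.pow_const 4).aestronglyMeasurable) ?_
  refine Filter.Eventually.of_forall fun ω => ?_
  rw [Real.norm_eq_abs, abs_of_nonneg (by positivity)]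
  exact pow_four_le (X ω)

lemma integral_pow_four_le [IsProbabilityMeasure P] {X : Ω → ℝ} (hX : Measurable X)
    (hmap : P.map X = gaussianReal 0 1) :
    ∫ ω, (X ω) ^ 4 ∂P ≤ 845 := by
  have h1 : ∫ ω, (X ω) ^ 4 ∂P ≤ ∫ ω, 256 * (Real.exp (X ω) + Real.exp (-X ω)) ∂P := by
    refine integral_mono (integrable_pow_four hX hmap) (integrable_exps hX hmap) ?_
    exact fun ω => pow_four_le (X ω)
  have ha : Integrable (fun ω => Real.exp (X ω)) P := by
    simpa using integrable_exp_mul_X hX hmap 1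
  have hb : Integrable (fun ω => Real.exp (-X ω)) P := by
    simpa using integrable_exp_mul_X hX hmap (-1)
  have h2 : ∫ ω, 256 * (Real.exp (X ω) + Real.exp (-X ω)) ∂P
      = 256 * ((∫ ω, Real.exp (X ω) ∂P) + ∫ ω, Real.exp (-X ω) ∂P) := by
    rw [integral_const_mul, integral_add ha hb]
  have h3 : ∫ ω, Real.exp (X ω) ∂P = Real.exp (1/2 : ℝ) := by
    have := mgf_X hX hmap 1
    simp only [mgf, one_mul] at this
    rw [this]
    norm_num
  have h4 : ∫ ω, Real.exp (-X ω) ∂P = Real.exp (1/2 : ℝ) := by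
    have := mgf_X hX hmap (-1)
    simp only [mgf, neg_one_mul] at this
    rw [this]
    norm_num
  have h5 := exp_half_le
  rw [h2, h3, h4] at h1
  linarith

lemma integrable_sq [IsProbabilityMeasure P] {X : Ω → ℝ} (hX : Measurable X)
    (hmap : P.map X = gaussianReal 0 1) :
    Integrable (fun ω => (X ω) ^ 2) P := by
  refine Integrable.mono' ((integrable_pow_four hX hmap).add (integrable_const 1))
    ((hX.pow_const 2).aestronglyMeasurable) ?_
  refine Filter.Eventually.of_forall fun ω => ?_
  rw [Real.norm_eq_abs, abs_of_nonneg (by positivity)]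
  simp only [Pi.add_apply]
  nlinarith [sq_nonneg ((X ω)^2 - 1), sq_nonneg (X ω)]

lemma chernoff_tail [IsProbabilityMeasure P] {n : ℕ} {ξ : Fin n → Ω → ℝ}
    (hn : 1 ≤ n) (hmeas : ∀ i, Measurable (ξ i))
    (hmap : ∀ i, P.map (ξ i) = gaussianReal 0 1)
    (hind : iIndepFun ξ P)
    (S : Finset (Fin n)) {τ : ℝ} (hτ : 0 < τ) :
    (P {ω | τ ≤ ∑ i ∈ S, ξ i ω}).toReal ≤ Real.exp (-τ ^ 2 / (2 * n)) ∧
    (P {ω | (∑ i ∈ S, ξ i ω) ≤ -τ}).toReal ≤ Real.exp (-τ ^ 2 / (2 * n)) := by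
  have hn' : (0:ℝ) < n := by exact_mod_cast hn
  set s : ℝ := τ / n with hs_def
  have hs : 0 ≤ s := by positivity
  have hint : ∀ (t : ℝ), Integrable (fun ω => Real.exp (t * (∑ i ∈ S, ξ i) ω)) P :=
    fun t => hind.integrable_exp_mul_sum hmeas
      (fun i _ => integrable_exp_mul_X (hmeas i) (hmap i) t)
  have hmgf : ∀ (t : ℝ), mgf (∑ i ∈ S, ξ i) P t = Real.exp (S.card * (t ^ 2 / 2)) := by
    intro t
    rw [hind.mgf_sum hmeas S]
    have : ∀ i ∈ S, mgf (ξ i) P t = Real.exp (t ^ 2 / 2) :=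
      fun i _ => mgf_X (hmeas i) (hmap i) t
    rw [Finset.prod_congr rfl this, Finset.prod_const, ← Real.exp_nat_mul]
  have hcard : (S.card : ℝ) ≤ n := by
    have := le_trans (Finset.card_le_univ S) (le_of_eq (Finset.card_fin n))
    exact_mod_cast this
  have hexp : Real.exp (-s * τ) * Real.exp ((S.card : ℝ) * (s ^ 2 / 2))
      ≤ Real.exp (-τ ^ 2 / (2 * n)) := by
    rw [← Real.exp_add]
    apply Real.exp_le_exp.mpr
    have e1 : -s * τ = -τ ^ 2 / n := by rw [hs_def]; ring
    have e2 : (S.card : ℝ) * (s ^ 2 / 2) ≤ n * (s ^ 2 / 2) :=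
      mul_le_mul_of_nonneg_right hcard (by positivity)
    have e3 : (n : ℝ) * (s ^ 2 / 2) = τ ^ 2 / (2 * n) := by
      rw [hs_def]
      field_simp
    have e4 : -τ ^ 2 / n + τ ^ 2 / (2 * n) = -τ ^ 2 / (2 * n) := by
      field_simp
      ring
    linarith
  constructor
  · have h := measure_ge_le_exp_mul_mgf (X := ∑ i ∈ S, ξ i) (μ := P) τ hs (hint s)
    rw [hmgf s] at h
    have hset : {ω | τ ≤ (∑ i ∈ S, ξ i) ω} = {ω | τ ≤ ∑ i ∈ S, ξ i ω} := by
      ext ω; simp [Finset.sum_apply]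
    rw [hset] at h
    exact h.trans hexp
  · have h := measure_le_le_exp_mul_mgf (X := ∑ i ∈ S, ξ i) (μ := P) (-τ)
      (neg_nonpos.mpr hs) (hint (-s))
    rw [hmgf (-s)] at h
    have hset : {ω | (∑ i ∈ S, ξ i) ω ≤ -τ} = {ω | (∑ i ∈ S, ξ i ω) ≤ -τ} := by
      ext ω; simp [Finset.sum_apply]
    rw [hset] at h
    refine h.trans ?_
    have h1 : -(-s) * -τ = -s * τ := by ring
    have h2 : (-s) ^ 2 = s ^ 2 := by ring
    rw [h1, h2]
    exact hexp


end LassoAux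
open LassoAux in
/-- ℓ¹-oracle inequality for the Lasso over the (uncountable) Heaviside dictionary. -/
theorem statement_4 :
    ∃ C : ℝ, 0 < C ∧
      ∀ (d n : ℕ), 1 ≤ d → 1 ≤ n →
      ∀ (x : Fin n → Fin d → ℝ) (f : (Fin d → ℝ) → ℝ) (σ : ℝ), 0 < σ →
      ∀ (Ω : Type) [MeasurableSpace Ω] (P : Measure Ω) [IsProbabilityMeasure P]
        (ξ : Fin n → Ω → ℝ),
        (∀ i, Measurable (ξ i)) →
        (∀ i, P.map (ξ i) = gaussianReal 0 1) →
        iIndepFun ξ P →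
      ∀ (lam : ℝ),
        28 * σ / Real.sqrt n * (Real.sqrt (Real.log ((n + 1 : ℝ) ^ (d + 1))) + 4) ≤ lam →
      ∀ (fhat : Ω → (Fin d → ℝ) → ℝ),
        Measurable fhat →
        Measurable (fun ω => l1normD (fhat ω)) →
        (∀ ω, memL1D (fhat ω)) →
        (∀ ω, ∀ h : (Fin d → ℝ) → ℝ, memL1D h →
          (1 / n : ℝ) * ∑ i, (f (x i) + σ * ξ i ω - fhat ω (x i)) ^ 2
              + lam * l1normD (fhat ω) ≤
            (1 / n : ℝ) * ∑ i, (f (x i) + σ * ξ i ω - h (x i)) ^ 2 + lam * l1normD h) →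
        ∫ ω, ((1 / n : ℝ) * ∑ i, (f (x i) - fhat ω (x i)) ^ 2 + lam * l1normD (fhat ω)) ∂P ≤
          C * ((⨅ h : {h : (Fin d → ℝ) → ℝ // memL1D h},
              ((1 / n : ℝ) * ∑ i, (f (x i) - (h : (Fin d → ℝ) → ℝ) (x i)) ^ 2
                + lam * l1normD (h : (Fin d → ℝ) → ℝ)))
            + lam * σ / Real.sqrt n) := by
  refine ⟨6, by norm_num, ?_⟩
  intro d n hd hn x f σ hσ Ω _ P _ ξ hmeasξ hmapξ hindep lam hlam fhat hfmeas hfl1meas hfmem hmin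
  -- basic positivity facts
  have hn' : (0:ℝ) < n := by exact_mod_cast hn
  have hnne : (n:ℝ) ≠ 0 := hn'.ne'
  have hσne : σ ≠ 0 := hσ.ne'
  have hsqn : (0:ℝ) < Real.sqrt n := Real.sqrt_pos.mpr hn'
  set L : ℝ := Real.log ((n + 1 : ℝ) ^ (d + 1)) with hLdef
  have hNpos : (0:ℝ) < (n + 1 : ℝ) ^ (d + 1) := by positivity
  have hN1 : (1:ℝ) ≤ (n + 1 : ℝ) ^ (d + 1) := by
    calc (1:ℝ) = 1 ^ (d + 1) := (one_pow _).symm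
      _ ≤ (n + 1 : ℝ) ^ (d + 1) := pow_le_pow_left₀ (by norm_num) (by linarith) _
  have hL0 : 0 ≤ L := Real.log_nonneg hN1
  have hsL : 0 ≤ Real.sqrt L := Real.sqrt_nonneg L
  have hlam0 : 0 < lam := by
    refine lt_of_lt_of_le ?_ hlam
    have : (0:ℝ) < 28 * σ / Real.sqrt n := by positivity
    nlinarith
  set τ : ℝ := n * lam / (4 * σ) with hτdef
  have hτ : 0 < τ := by rw [hτdef]; positivity
  set V : Finset (Finset (Fin n)) := patterns x with hVdef
  set B : Set Ω := ⋃ S ∈ V, {ω | τ < |∑ i ∈ S, ξ i ω|} with hBdef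
  have hBmeas : MeasurableSet B := by
    rw [hBdef]
    refine Finset.measurableSet_biUnion V fun S _ => ?_
    exact measurableSet_lt measurable_const (Finset.measurable_sum S fun i _ => hmeasξ i).abs
  -- good-event dictionary control
  have hgood : ∀ ω, ω ∉ B → ∀ (a : Fin d → ℝ) (b : ℝ),
      |∑ i, ξ i ω * heaviside a b (x i)| ≤ τ := by
    intro ω hω a b
    have hS : (Finset.univ.filter (fun i => 0 < (∑ j, a j * x i j) + b)) ∈ V :=
      filter_mem_patterns x a b
    have h1 : ∑ i, ξ i ω * heaviside a b (x i)
        = ∑ i ∈ Finset.univ.filter (fun i => 0 < (∑ j, a j * x i j) + b), ξ i ω := by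
      rw [Finset.sum_filter]
      refine Finset.sum_congr rfl fun i _ => ?_
      unfold heaviside
      split <;> simp
    rw [h1]
    by_contra hcon
    push_neg at hcon
    exact hω (Set.mem_biUnion hS hcon)
  -- bound on the probability of the bad event
  have hτbd : 3 * L + 392 ≤ τ ^ 2 / (2 * n) := by
    have hsq : (Real.sqrt L + 4) ^ 2 ≥ L + 16 := by
      nlinarith [Real.sq_sqrt hL0, Real.sqrt_nonneg L]
    have hA0 : 0 ≤ 28 * σ / Real.sqrt n * (Real.sqrt L + 4) := by positivity
    have hA2 : (28 * σ / Real.sqrt n * (Real.sqrt L + 4)) ^ 2 ≤ lam ^ 2 :=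
      pow_le_pow_left₀ hA0 hlam 2
    have hAeq : (28 * σ / Real.sqrt n * (Real.sqrt L + 4)) ^ 2
        = 784 * σ ^ 2 / n * (Real.sqrt L + 4) ^ 2 := by
      rw [mul_pow, div_pow, mul_pow, Real.sq_sqrt hn'.le]
      norm_num
    have hτeq : τ ^ 2 / (2 * n) = n * lam ^ 2 / (32 * σ ^ 2) := by
      rw [hτdef]
      field_simp
      ring
    rw [hτeq]
    have h1 : 784 * σ ^ 2 / n * (L + 16) ≤ lam ^ 2 := by
      calc 784 * σ ^ 2 / n * (L + 16) ≤ 784 * σ ^ 2 / n * (Real.sqrt L + 4) ^ 2 := by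
            refine mul_le_mul_of_nonneg_left hsq (by positivity)
        _ = (28 * σ / Real.sqrt n * (Real.sqrt L + 4)) ^ 2 := hAeq.symm
        _ ≤ lam ^ 2 := hA2
    have h2 : n * (784 * σ ^ 2 / n * (L + 16)) / (32 * σ ^ 2) ≤ n * lam ^ 2 / (32 * σ ^ 2) := by
      gcongr
    have h3 : n * (784 * σ ^ 2 / n * (L + 16)) / (32 * σ ^ 2) = 24.5 * (L + 16) := by
      field_simp
      ring
    rw [h3] at h2
    linarith
  have hVcard : (V.card : ℝ) ≤ (n + 1 : ℝ) ^ (d + 1) := by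
    have := patterns_card_le x hd
    rw [hVdef]
    calc ((patterns x).card : ℝ) ≤ (((n + 1) ^ (d + 1) : ℕ) : ℝ) := by exact_mod_cast this
      _ = (n + 1 : ℝ) ^ (d + 1) := by push_cast; ring
  have hexpL : Real.exp L = (n + 1 : ℝ) ^ (d + 1) := Real.exp_log hNpos
  have hPB : (P B).toReal ≤ 1 / (845 * n ^ 2) := by
    have hsub : ∀ S : Finset (Fin n), {ω | τ < |∑ i ∈ S, ξ i ω|}
        ⊆ {ω | τ ≤ ∑ i ∈ S, ξ i ω} ∪ {ω | (∑ i ∈ S, ξ i ω) ≤ -τ} := by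
      intro S ω hω
      simp only [Set.mem_setOf_eq, Set.mem_union] at *
      rcases lt_abs.mp hω with h | h
      · exact Or.inl h.le
      · exact Or.inr (by linarith)
    have hperS : ∀ S ∈ V, (P {ω | τ < |∑ i ∈ S, ξ i ω|}).toReal
        ≤ 2 * Real.exp (-τ ^ 2 / (2 * n)) := by
      intro S _
      have hch := chernoff_tail hn hmeasξ hmapξ hindep S hτ
      calc (P {ω | τ < |∑ i ∈ S, ξ i ω|}).toReal
          ≤ ((P {ω | τ ≤ ∑ i ∈ S, ξ i ω}) + (P {ω | (∑ i ∈ S, ξ i ω) ≤ -τ})).toReal := by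
            refine ENNReal.toReal_mono (by finiteness) ?_
            exact le_trans (measure_mono (hsub S)) (measure_union_le _ _)
        _ = (P {ω | τ ≤ ∑ i ∈ S, ξ i ω}).toReal + (P {ω | (∑ i ∈ S, ξ i ω) ≤ -τ}).toReal :=
            ENNReal.toReal_add (measure_ne_top P _) (measure_ne_top P _)
        _ ≤ Real.exp (-τ ^ 2 / (2 * n)) + Real.exp (-τ ^ 2 / (2 * n)) := add_le_add hch.1 hch.2
        _ = 2 * Real.exp (-τ ^ 2 / (2 * n)) := by ring
    have hunion : (P B).toReal ≤ ∑ S ∈ V, (P {ω | τ < |∑ i ∈ S, ξ i ω|}).toReal := by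
      calc (P B).toReal ≤ (∑ S ∈ V, P {ω | τ < |∑ i ∈ S, ξ i ω|}).toReal := by
            refine ENNReal.toReal_mono ?_ ?_
            · exact ENNReal.sum_ne_top.mpr fun S _ => measure_ne_top P _
            · rw [hBdef]; exact measure_biUnion_finset_le V _
        _ = ∑ S ∈ V, (P {ω | τ < |∑ i ∈ S, ξ i ω|}).toReal :=
            ENNReal.toReal_sum fun S _ => measure_ne_top P _
    have hstep : (P B).toReal ≤ (V.card : ℝ) * (2 * Real.exp (-τ ^ 2 / (2 * n))) := by
      refine hunion.trans ?_
      calc ∑ S ∈ V, (P {ω | τ < |∑ i ∈ S, ξ i ω|}).toReal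
          ≤ ∑ _S ∈ V, 2 * Real.exp (-τ ^ 2 / (2 * n)) := Finset.sum_le_sum hperS
        _ = (V.card : ℝ) * (2 * Real.exp (-τ ^ 2 / (2 * n))) := by
            rw [Finset.sum_const, nsmul_eq_mul]
    refine hstep.trans ?_
    -- numeric estimate
    have hexp1 : Real.exp (-τ ^ 2 / (2 * n)) ≤ Real.exp (-(3 * L + 392)) := by
      apply Real.exp_le_exp.mpr
      have : -τ ^ 2 / (2 * n) = -(τ ^ 2 / (2 * n)) := by ring
      rw [this]
      linarith
    have h392 : (1690:ℝ) ≤ Real.exp 392 := by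
      have h1 : (197:ℝ) ≤ Real.exp 196 := by
        have := Real.add_one_le_exp (196:ℝ)
        linarith
      have h2 : Real.exp 392 = (Real.exp 196) ^ 2 := by
        rw [← Real.exp_nat_mul]
        norm_num
      nlinarith
    have hNn : (n:ℝ) ≤ (n + 1 : ℝ) ^ (d + 1) := by
      calc (n:ℝ) ≤ (n + 1 : ℝ) := by linarith
        _ = (n + 1 : ℝ) ^ 1 := (pow_one _).symm
        _ ≤ (n + 1 : ℝ) ^ (d + 1) := pow_le_pow_right₀ (by linarith) (by omega)
    calc (V.card : ℝ) * (2 * Real.exp (-τ ^ 2 / (2 * n)))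
        ≤ (n + 1 : ℝ) ^ (d + 1) * (2 * Real.exp (-(3 * L + 392))) := by
          refine mul_le_mul hVcard (by linarith) (by positivity) (by positivity)
      _ = 2 * Real.exp L * Real.exp (-(3 * L + 392)) := by rw [hexpL]; ring
      _ = 2 * (Real.exp L * Real.exp (-(3 * L + 392))) := by ring
      _ = 2 * Real.exp (L + -(3 * L + 392)) := by rw [← Real.exp_add]
      _ = 2 * Real.exp (-(2 * L + 392)) := by rw [show L + -(3 * L + 392) = -(2 * L + 392) by ring]
      _ = 2 / Real.exp (2 * L + 392) := by rw [Real.exp_neg]; ring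
      _ ≤ 1 / (845 * n ^ 2) := by
          rw [div_le_div_iff₀ (Real.exp_pos _) (by positivity)]
          have hE : Real.exp (2 * L + 392) = (Real.exp L) ^ 2 * Real.exp 392 := by
            rw [Real.exp_add]
            congr 1
            rw [← Real.exp_nat_mul]
            norm_num
          have hsq2 : (n:ℝ) ^ 2 ≤ ((n + 1 : ℝ) ^ (d + 1)) ^ 2 :=
            pow_le_pow_left₀ hn'.le hNn 2
          rw [hE, hexpL]
          calc 2 * (845 * (n:ℝ) ^ 2) = 1690 * (n:ℝ) ^ 2 := by ring
            _ ≤ Real.exp 392 * (n:ℝ) ^ 2 :=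
                mul_le_mul_of_nonneg_right h392 (sq_nonneg _)
            _ ≤ Real.exp 392 * ((n + 1 : ℝ) ^ (d + 1)) ^ 2 :=
                mul_le_mul_of_nonneg_left hsq2 (Real.exp_pos _).le
            _ = 1 * (((n + 1 : ℝ) ^ (d + 1)) ^ 2 * Real.exp 392) := by ring

  -- per-coordinate integral over the bad event
  have hIi : ∀ i : Fin n, ∫ ω, B.indicator (fun ω' => (ξ i ω')^2) ω ∂P ≤ 1 / n := by
    intro i
    rw [integral_indicator hBmeas]
    set K : ℝ := 845 * n with hKdef
    have hK : 0 < K := by rw [hKdef]; positivity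
    have hint4 : Integrable (fun ω => (ξ i ω)^4) P := integrable_pow_four (hmeasξ i) (hmapξ i)
    have hint2 : Integrable (fun ω => (ξ i ω)^2) P := integrable_sq (hmeasξ i) (hmapξ i)
    have hrhs : Integrable (fun ω => (ξ i ω)^4 / (2*K) + K/2) P :=
      (hint4.div_const (2*K)).add (integrable_const _)
    have hB4 : ∫ ω in B, (ξ i ω)^4 ∂P ≤ 845 := by
      refine le_trans (setIntegral_le_integral hint4 ?_) (integral_pow_four_le (hmeasξ i) (hmapξ i))
      exact Filter.Eventually.of_forall fun ω => by positivity
    calc ∫ ω in B, (ξ i ω)^2 ∂P ≤ ∫ ω in B, ((ξ i ω)^4 / (2*K) + K/2) ∂P := by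
          refine setIntegral_mono_on hint2.integrableOn hrhs.integrableOn hBmeas ?_
          intro ω _
          have h1 : (ξ i ω)^2 * (2*K) ≤ (ξ i ω)^4 + K^2 := by
            nlinarith [sq_nonneg ((ξ i ω)^2 - K)]
          have h2 : (ξ i ω)^2 ≤ ((ξ i ω)^4 + K^2) / (2*K) :=
            (le_div_iff₀ (by positivity)).mpr h1
          have h3 : ((ξ i ω)^4 + K^2) / (2*K) = (ξ i ω)^4 / (2*K) + K/2 := by
            field_simp
          linarith
      _ = (∫ ω in B, (ξ i ω)^4 ∂P) / (2*K) + (P B).toReal * (K/2) := by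
          rw [integral_add (hint4.integrableOn.div_const _) ((integrableOn_const_iff).mpr (Or.inr ?_)),
            integral_div, setIntegral_const, smul_eq_mul, Measure.real]
          exact measure_lt_top P B
      _ ≤ 845 / (2*K) + (1 / (845 * n^2)) * (K/2) := by
          refine add_le_add ?_ ?_
          · gcongr
          · exact mul_le_mul_of_nonneg_right hPB (by positivity)
      _ = 1 / n := by
          rw [hKdef]
          field_simp
          ring
  -- nonnegativity facts
  have hl1hat : ∀ ω, 0 ≤ l1normD (fhat ω) := fun ω => l1normD_nonneg (hfmem ω)
  -- pointwise deterministic bound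
  have hptwise : ∀ (h : (Fin d → ℝ) → ℝ), memL1D h → ∀ ω : Ω,
      (1 / n : ℝ) * ∑ i, (f (x i) - fhat ω (x i)) ^ 2 + lam * l1normD (fhat ω)
        ≤ 6 * ((1 / n : ℝ) * ∑ i, (f (x i) - h (x i)) ^ 2 + lam * l1normD h)
          + (8 * σ^2 * (1/n : ℝ)) * ∑ i, B.indicator (fun ω' => (ξ i ω')^2) ω := by
    intro h mh ω
    have hM := hmin ω h mh
    have hl1h : 0 ≤ l1normD h := l1normD_nonneg mh
    have hQh : (0:ℝ) ≤ (1/n : ℝ) * ∑ i, (f (x i) - h (x i)) ^ 2 := by positivity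
    have hQg : (0:ℝ) ≤ (1/n : ℝ) * ∑ i, (f (x i) - fhat ω (x i)) ^ 2 := by positivity
    have hlh0 : 0 ≤ lam * l1normD h := mul_nonneg hlam0.le hl1h
    have hlhat0 : 0 ≤ lam * l1normD (fhat ω) := mul_nonneg hlam0.le (hl1hat ω)
    by_cases hω : ω ∈ B
    · -- bad event: crude bound
      have hind_eq : ∑ i, B.indicator (fun ω' => (ξ i ω')^2) ω = ∑ i, (ξ i ω)^2 :=
        Finset.sum_congr rfl fun i _ => Set.indicator_of_mem hω _
      rw [hind_eq]
      have hSu : (0:ℝ) ≤ σ^2 * ((1/n : ℝ) * ∑ i, (ξ i ω)^2) := by positivity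
      have S1 : (1/n : ℝ) * ∑ i, (f (x i) - fhat ω (x i)) ^ 2
          ≤ (1/n : ℝ) * (2 * ∑ i, (f (x i) + σ * ξ i ω - fhat ω (x i))^2
              + 2 * σ^2 * ∑ i, (ξ i ω)^2) := by
        refine mul_le_mul_of_nonneg_left ?_ (by positivity)
        have : ∑ i, (f (x i) - fhat ω (x i)) ^ 2
            ≤ ∑ i, (2 * (f (x i) + σ * ξ i ω - fhat ω (x i))^2 + 2 * σ^2 * (ξ i ω)^2) := by
          refine Finset.sum_le_sum fun i _ => ?_
          nlinarith [sq_nonneg (f (x i) + σ * ξ i ω - fhat ω (x i) + σ * ξ i ω)]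
        calc ∑ i, (f (x i) - fhat ω (x i)) ^ 2
            ≤ ∑ i, (2 * (f (x i) + σ * ξ i ω - fhat ω (x i))^2 + 2 * σ^2 * (ξ i ω)^2) := this
          _ = 2 * ∑ i, (f (x i) + σ * ξ i ω - fhat ω (x i))^2 + 2 * σ^2 * ∑ i, (ξ i ω)^2 := by
              rw [Finset.sum_add_distrib, ← Finset.mul_sum, ← Finset.mul_sum]
      have S2 : (1/n : ℝ) * ∑ i, (f (x i) + σ * ξ i ω - h (x i)) ^ 2
          ≤ (1/n : ℝ) * (2 * ∑ i, (f (x i) - h (x i))^2 + 2 * σ^2 * ∑ i, (ξ i ω)^2) := by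
        refine mul_le_mul_of_nonneg_left ?_ (by positivity)
        have : ∑ i, (f (x i) + σ * ξ i ω - h (x i)) ^ 2
            ≤ ∑ i, (2 * (f (x i) - h (x i))^2 + 2 * σ^2 * (ξ i ω)^2) := by
          refine Finset.sum_le_sum fun i _ => ?_
          nlinarith [sq_nonneg (f (x i) - h (x i) - σ * ξ i ω)]
        calc ∑ i, (f (x i) + σ * ξ i ω - h (x i)) ^ 2
            ≤ ∑ i, (2 * (f (x i) - h (x i))^2 + 2 * σ^2 * (ξ i ω)^2) := this
          _ = 2 * ∑ i, (f (x i) - h (x i))^2 + 2 * σ^2 * ∑ i, (ξ i ω)^2 := by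
              rw [Finset.sum_add_distrib, ← Finset.mul_sum, ← Finset.mul_sum]
      nlinarith [hM, S1, S2, hlh0, hlhat0, hQh, hSu]
    · -- good event
      have hgood' := hgood ω hω
      have hind_eq : ∑ i, B.indicator (fun ω' => (ξ i ω')^2) ω = 0 :=
        Finset.sum_eq_zero fun i _ => Set.indicator_of_notMem hω _
      rw [hind_eq]
      have D1 : |∑ i, ξ i ω * fhat ω (x i)| ≤ τ * l1normD (fhat ω) :=
        dual_bound x (fun i => ξ i ω) hgood' (hfmem ω)
      have D2 : |∑ i, ξ i ω * h (x i)| ≤ τ * l1normD h :=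
        dual_bound x (fun i => ξ i ω) hgood' mh
      have expand : ∀ g : (Fin d → ℝ) → ℝ,
          ∑ i, (f (x i) + σ * ξ i ω - g (x i))^2
            = ∑ i, (f (x i) - g (x i))^2 + 2*σ*(∑ i, ξ i ω * f (x i))
              - 2*σ*(∑ i, ξ i ω * g (x i)) + σ^2 * ∑ i, (ξ i ω)^2 := by
        intro g
        calc ∑ i, (f (x i) + σ * ξ i ω - g (x i))^2
            = ∑ i, ((f (x i) - g (x i))^2 + 2*σ*(ξ i ω * f (x i))
                - 2*σ*(ξ i ω * g (x i)) + σ^2 * (ξ i ω)^2) :=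
              Finset.sum_congr rfl fun i _ => by ring
          _ = ∑ i, (f (x i) - g (x i))^2 + 2*σ*(∑ i, ξ i ω * f (x i))
                - 2*σ*(∑ i, ξ i ω * g (x i)) + σ^2 * ∑ i, (ξ i ω)^2 := by
              rw [Finset.sum_add_distrib, Finset.sum_sub_distrib, Finset.sum_add_distrib,
                ← Finset.mul_sum, ← Finset.mul_sum, ← Finset.mul_sum]
      rw [expand (fhat ω), expand h] at hM
      have hDle : ∑ i, ξ i ω * fhat ω (x i) - ∑ i, ξ i ω * h (x i)
          ≤ τ * l1normD (fhat ω) + τ * l1normD h := by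
        have h1 := le_abs_self (∑ i, ξ i ω * fhat ω (x i))
        have h2 := neg_abs_le (∑ i, ξ i ω * h (x i))
        linarith
      have hDle2 : 2*σ*(1/n : ℝ)*(∑ i, ξ i ω * fhat ω (x i) - ∑ i, ξ i ω * h (x i))
          ≤ lam/2 * l1normD (fhat ω) + lam/2 * l1normD h := by
        have hkey := mul_le_mul_of_nonneg_left hDle
          (show (0:ℝ) ≤ 2*σ*(1/n : ℝ) by positivity)
        have hperm : 2*σ*(1/n : ℝ)*(τ * l1normD (fhat ω) + τ * l1normD h)
            = lam/2 * l1normD (fhat ω) + lam/2 * l1normD h := by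
          rw [hτdef]
          field_simp
          ring
        linarith
      nlinarith [hM, hDle2, hlh0, hlhat0, hQh, hQg]
  -- integrate the pointwise bound
  have hintind : ∀ i : Fin n, Integrable (fun ω => B.indicator (fun ω' => (ξ i ω')^2) ω) P :=
    fun i => (integrable_sq (hmeasξ i) (hmapξ i)).indicator hBmeas
  have hintsum : Integrable (fun ω => ∑ i, B.indicator (fun ω' => (ξ i ω')^2) ω) P :=
    integrable_finset_sum _ fun i _ => hintind i
  haveI hne : Nonempty {h : (Fin d → ℝ) → ℝ // memL1D h} := ⟨⟨fun _ => 0, memL1D_zero⟩⟩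
  have hsumint : ∑ i, ∫ ω, B.indicator (fun ω' => (ξ i ω')^2) ω ∂P ≤ 1 := by
    calc ∑ i, ∫ ω, B.indicator (fun ω' => (ξ i ω')^2) ω ∂P
        ≤ ∑ _i : Fin n, (1/n : ℝ) := Finset.sum_le_sum fun i _ => hIi i
      _ = 1 := by
          rw [Finset.sum_const, Finset.card_univ, Fintype.card_fin, nsmul_eq_mul]
          field_simp
  have h8 : (8 * σ^2 * (1/n : ℝ)) ≤ lam * σ / Real.sqrt n := by
    have hsn : (Real.sqrt n)^2 = (n:ℝ) := Real.sq_sqrt hn'.le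
    have hp : (0:ℝ) < σ / Real.sqrt n := by positivity
    have h112 : 112 * (σ / Real.sqrt n) ≤ lam := by
      have e1 : 112 * (σ / Real.sqrt n) = 28 * σ / Real.sqrt n * 4 := by ring
      have e2 : 28 * σ / Real.sqrt n * 4 ≤ 28 * σ / Real.sqrt n * (Real.sqrt L + 4) := by
        have : (0:ℝ) ≤ 28 * σ / Real.sqrt n := by positivity
        nlinarith
      linarith [hlam]
    have h8p : 8 * (σ / Real.sqrt n) ≤ lam := by linarith [mul_pos (by norm_num : (0:ℝ) < 104) hp]
    have hmul := mul_le_mul_of_nonneg_right h8p hp.le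
    have e3 : 8 * (σ / Real.sqrt n) * (σ / Real.sqrt n) = 8 * σ^2 * (1/n : ℝ) := by
      rw [show 8 * (σ / Real.sqrt n) * (σ / Real.sqrt n)
          = 8 * (σ^2 / (Real.sqrt n)^2) by ring, hsn]
      ring
    have e4 : lam * (σ / Real.sqrt n) = lam * σ / Real.sqrt n := by ring
    linarith [hmul, e3 ▸ hmul]
  have claim : ∀ (h : (Fin d → ℝ) → ℝ), memL1D h →
      ∫ ω, ((1 / n : ℝ) * ∑ i, (f (x i) - fhat ω (x i)) ^ 2 + lam * l1normD (fhat ω)) ∂P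
        ≤ 6 * ((1 / n : ℝ) * ∑ i, (f (x i) - h (x i)) ^ 2 + lam * l1normD h)
          + lam * σ / Real.sqrt n := by
    intro h mh
    set c6 : ℝ := 6 * ((1 / n : ℝ) * ∑ i, (f (x i) - h (x i)) ^ 2 + lam * l1normD h) with hc6
    have hg : Integrable (fun ω => c6
        + (8 * σ^2 * (1/n : ℝ)) * ∑ i, B.indicator (fun ω' => (ξ i ω')^2) ω) P :=
      (integrable_const c6).add (hintsum.const_mul _)
    have h1 : ∫ ω, ((1 / n : ℝ) * ∑ i, (f (x i) - fhat ω (x i)) ^ 2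
          + lam * l1normD (fhat ω)) ∂P
        ≤ ∫ ω, (c6 + (8 * σ^2 * (1/n : ℝ)) * ∑ i, B.indicator (fun ω' => (ξ i ω')^2) ω) ∂P := by
      refine integral_mono_of_nonneg ?_ hg ?_
      · refine Filter.Eventually.of_forall fun ω => ?_
        have := hl1hat ω
        positivity
      · exact Filter.Eventually.of_forall fun ω => hptwise h mh ω
    have h2 : ∫ ω, (c6 + (8 * σ^2 * (1/n : ℝ)) * ∑ i, B.indicator (fun ω' => (ξ i ω')^2) ω) ∂P
        = c6 + (8 * σ^2 * (1/n : ℝ)) * ∑ i, ∫ ω, B.indicator (fun ω' => (ξ i ω')^2) ω ∂P := by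
      rw [integral_add (integrable_const c6) (hintsum.const_mul _), integral_const]
      simp only [measure_univ, probReal_univ, ENNReal.toReal_one, smul_eq_mul, one_mul]
      rw [integral_const_mul, integral_finset_sum _ fun i _ => hintind i]
    have h3 : (8 * σ^2 * (1/n : ℝ)) * ∑ i, ∫ ω, B.indicator (fun ω' => (ξ i ω')^2) ω ∂P
        ≤ lam * σ / Real.sqrt n := by
      calc (8 * σ^2 * (1/n : ℝ)) * ∑ i, ∫ ω, B.indicator (fun ω' => (ξ i ω')^2) ω ∂P
          ≤ (8 * σ^2 * (1/n : ℝ)) * 1 := by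
            refine mul_le_mul_of_nonneg_left hsumint (by positivity)
        _ = 8 * σ^2 * (1/n : ℝ) := mul_one _
        _ ≤ lam * σ / Real.sqrt n := h8
    rw [h2] at h1
    linarith
  -- conclude via the infimum
  set Inf : ℝ := ⨅ h : {h : (Fin d → ℝ) → ℝ // memL1D h},
      ((1 / n : ℝ) * ∑ i, (f (x i) - (h : (Fin d → ℝ) → ℝ) (x i)) ^ 2
        + lam * l1normD (h : (Fin d → ℝ) → ℝ)) with hInfdef
  have hc0 : 0 ≤ lam * σ / Real.sqrt n := by positivity
  have hInf : (∫ ω, ((1 / n : ℝ) * ∑ i, (f (x i) - fhat ω (x i)) ^ 2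
      + lam * l1normD (fhat ω)) ∂P - lam * σ / Real.sqrt n) / 6 ≤ Inf := by
    rw [hInfdef]
    refine le_ciInf fun h => ?_
    have := claim h.1 h.2
    linarith
  linarith [hInf]
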